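/- Let p be an odd prime, T ∈ Sym_n(ℤ_p) unimodular, and L = L₁ ⊕ L₀ an integral quadratic ℤ_p-lattice such that Q(x) ∈ pℤ_p for all x ∈ L₀. Then the local density polynomials satisfy α_p(X, T, L) = α_p(X, T, L₁). -/

import Mathlib

open MeasureTheory Filter Matrix

/-- The sequence whose limit at `X = p^{-0} = 1` (after adjoining `r` hyperbolic planes,
the value `α_p(p^{-r}, T, L)` is obtained) computes local representation densities:
`α_p(1,T,L) = lim_k p^{k(n(n+1)/2 - n·rank L)} · #{x ∈ (L/p^k L)^n : Q(x) ≡ T mod p^k}`,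
where the quadratic lattice `L` is described by its Gram matrix `S` (so `Q(x) = xᵀ S x`). -/
noncomputable def localDensitySeq (p : ℕ) [Fact p.Prime] {ι : Type} [Fintype ι]
    {n : ℕ} (S : Matrix ι ι ℤ_[p]) (T : Matrix (Fin n) (Fin n) ℤ_[p]) (k : ℕ) : ℝ :=
  (p : ℝ) ^ ((k : ℤ) * ((n * (n + 1) / 2 : ℤ) - (n : ℤ) * Fintype.card ι)) *
    Nat.card {x : Matrix ι (Fin n) (ZMod (p ^ k)) //
      xᵀ * S.map (PadicInt.toZModPow k) * x = T.map (PadicInt.toZModPow k)}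

section Helpers

variable {p : ℕ} [Fact p.Prime]

private lemma padic_isUnit_of_not_dvd {z : ℤ_[p]} (h : ¬ (p:ℤ_[p]) ∣ z) : IsUnit z :=
  PadicInt.isUnit_iff.mpr (le_antisymm z.norm_le_one
    (not_lt.mp (fun hl => h (PadicInt.norm_lt_one_iff_dvd z |>.mp hl))))

private lemma padic_isUnit_iff_toZMod {z : ℤ_[p]} : IsUnit z ↔ PadicInt.toZMod z ≠ 0 := by
  constructor
  · intro h h0
    have := h.map (PadicInt.toZMod (p := p))
    rw [h0] at this
    exact not_isUnit_zero this
  · intro h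
    apply padic_isUnit_of_not_dvd
    intro hdvd
    apply h
    have : z ∈ RingHom.ker (PadicInt.toZMod (p := p)) := by
      rw [PadicInt.ker_toZMod, PadicInt.maximalIdeal_eq_span_p]
      exact Ideal.mem_span_singleton.mpr hdvd
    exact this

private lemma padic_two_unit (hp : p ≠ 2) : IsUnit (2 : ℤ_[p]) := by
  rw [padic_isUnit_iff_toZMod]
  have h2 : (PadicInt.toZMod (2 : ℤ_[p])) = ((2:ℕ) : ZMod p) := by
    rw [← Nat.cast_ofNat, map_natCast (PadicInt.toZMod (p := p))]
  rw [h2, Ne, ZMod.natCast_eq_zero_iff]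
  intro h
  exact hp (((Nat.prime_dvd_prime_iff_eq (Fact.out) Nat.prime_two).mp h))

variable {m : ℕ}

private lemma toZMod_p_eq_zero : (PadicInt.toZMod ((p:ℤ_[p]))) = 0 := by
  rw [map_natCast (PadicInt.toZMod (p := p)) p]; simp

private lemma map_toZMod_add_pow_smul (A B : Matrix (Fin m) (Fin m) ℤ_[p]) (k : ℕ) :
    (A + (p:ℤ_[p])^(k+1) • B).map PadicInt.toZMod = A.map PadicInt.toZMod := by
  ext i j
  simp only [Matrix.map_apply, Matrix.add_apply, Matrix.smul_apply, map_add,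
    smul_eq_mul, _root_.map_mul, map_pow, toZMod_p_eq_zero]
  simp

private lemma det_unit_perturb {A : Matrix (Fin m) (Fin m) ℤ_[p]} (B : Matrix (Fin m) (Fin m) ℤ_[p])
    (hA : IsUnit A.det) (k : ℕ) :
    IsUnit (A + (p:ℤ_[p])^(k+1) • B).det := by
  rw [padic_isUnit_iff_toZMod] at hA ⊢
  rw [RingHom.map_det, RingHom.mapMatrix_apply] at hA ⊢
  rw [map_toZMod_add_pow_smul]
  exact hA

private lemma approx_step (T T' : Matrix (Fin m) (Fin m) ℤ_[p]) (hT : Tᵀ = T) (hT' : T'ᵀ = T')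
    (hTdet : IsUnit T.det) (h2 : IsUnit (2:ℤ_[p])) (k : ℕ)
    (A C : Matrix (Fin m) (Fin m) ℤ_[p]) (hA : IsUnit A.det)
    (hEq : Aᵀ * T * A = T' + ((p:ℤ_[p]))^(k+1) • C) :
    ∃ A' C', IsUnit A'.det ∧ A'ᵀ * T * A' = T' + ((p:ℤ_[p]))^(k+2) • C' := by
  have hpk : ((p:ℤ_[p]))^(k+1) ≠ 0 := by
    apply pow_ne_zero
    exact_mod_cast (Nat.cast_ne_zero (R := ℤ_[p])).mpr (Fact.out (p := p.Prime)).ne_zero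
  have hCsymm : Cᵀ = C := by
    have h1 : (Aᵀ * T * A)ᵀ = Aᵀ * T * A := by
      rw [Matrix.transpose_mul, Matrix.transpose_mul, Matrix.transpose_transpose, hT,
        Matrix.mul_assoc]
    rw [hEq] at h1
    have h2' : T'ᵀ + ((p:ℤ_[p]))^(k+1) • Cᵀ = T' + ((p:ℤ_[p]))^(k+1) • C := by
      simpa [Matrix.transpose_add, Matrix.transpose_smul] using h1
    rw [hT'] at h2'
    have h3 : ((p:ℤ_[p]))^(k+1) • Cᵀ = ((p:ℤ_[p]))^(k+1) • C := add_left_cancel h2'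
    ext i j
    have := congrFun (congrFun h3 i) j
    simp only [Matrix.smul_apply, smul_eq_mul] at this
    exact mul_left_cancel₀ hpk this
  set M := Aᵀ * T with hM
  have hMdet : IsUnit M.det := by
    rw [hM, Matrix.det_mul, Matrix.det_transpose]
    exact hA.mul hTdet
  set c : ℤ_[p] := ↑h2.unit⁻¹ with hc
  have hc2 : c * 2 = 1 := h2.val_inv_mul
  set B : Matrix (Fin m) (Fin m) ℤ_[p] := -(c • (M⁻¹ * C)) with hB
  have hMB : M * B = -(c • C) := by
    rw [hB, Matrix.mul_neg, Matrix.mul_smul, Matrix.mul_nonsing_inv_cancel_left _ _ hMdet]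
  have hcross : Aᵀ * T * B + Bᵀ * T * A = -C := by
    have h1 : Aᵀ * T * B = -(c • C) := hMB
    have h2'' : Bᵀ * T * A = -(c • C) := by
      have hh : Bᵀ * T * A = (Aᵀ * T * B)ᵀ := by
        rw [Matrix.transpose_mul, Matrix.transpose_mul, Matrix.transpose_transpose, hT,
          Matrix.mul_assoc]
      rw [hh, h1, Matrix.transpose_neg, Matrix.transpose_smul, hCsymm]
    rw [h1, h2'', ← neg_add, ← add_smul]
    have hcc : c + c = 1 := by rw [← hc2]; ring
    rw [hcc, one_smul]
  refine ⟨A + ((p:ℤ_[p]))^(k+1) • B, ((p:ℤ_[p]))^k • (Bᵀ * T * B), det_unit_perturb B hA k, ?_⟩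
  have expand : (A + ((p:ℤ_[p]))^(k+1) • B)ᵀ * T * (A + ((p:ℤ_[p]))^(k+1) • B)
      = Aᵀ * T * A + ((p:ℤ_[p]))^(k+1) • (Aᵀ * T * B + Bᵀ * T * A)
        + (((p:ℤ_[p]))^(k+1) * ((p:ℤ_[p]))^(k+1)) • (Bᵀ * T * B) := by
    simp only [Matrix.transpose_add, Matrix.transpose_smul, Matrix.add_mul, Matrix.mul_add,
      Matrix.smul_mul, Matrix.mul_smul, smul_add, smul_smul]
    abel
  rw [expand, hcross, hEq]
  have hpow : ((p:ℤ_[p]))^(k+1) * ((p:ℤ_[p]))^(k+1) = ((p:ℤ_[p]))^(k+2) * ((p:ℤ_[p]))^k := by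
    ring
  rw [hpow, ← smul_smul, smul_neg]
  abel

private lemma approx (T T' : Matrix (Fin m) (Fin m) ℤ_[p]) (hT : Tᵀ = T) (hT' : T'ᵀ = T')
    (hTdet : IsUnit T.det) (h2 : IsUnit (2:ℤ_[p])) (C₀ : Matrix (Fin m) (Fin m) ℤ_[p])
    (hC₀ : T' = T + (p:ℤ_[p]) • C₀) (k : ℕ) :
    ∃ A C, IsUnit A.det ∧ Aᵀ * T * A = T' + ((p:ℤ_[p]))^k • C := by
  have aux : ∀ j, ∃ A C, IsUnit A.det ∧ Aᵀ * T * A = T' + ((p:ℤ_[p]))^(j+1) • C := by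
    intro j
    induction j with
    | zero =>
      refine ⟨1, -C₀, by simp, ?_⟩
      rw [hC₀]
      simp only [Matrix.transpose_one, Matrix.one_mul, Matrix.mul_one, zero_add, pow_one,
        smul_neg]
      rw [add_neg_cancel_right]
    | succ j ih =>
      obtain ⟨A, C, hA, hEq⟩ := ih
      exact approx_step T T' hT hT' hTdet h2 j A C hA hEq
  cases k with
  | zero =>
    refine ⟨1, T - T', by simp, ?_⟩
    simp only [Matrix.transpose_one, Matrix.one_mul, Matrix.mul_one, pow_zero, one_smul]
    abel
  | succ k => exact aux k

end Helpers

section CountLemmas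
set_option linter.unusedSectionVars false
variable {R : Type*} [CommRing R] [Fintype R] [DecidableEq R]
variable {ι ι₁ ι₀ ν : Type} [Fintype ι] [Fintype ι₁] [Fintype ι₀] [Fintype ν]
  [DecidableEq ι] [DecidableEq ι₁] [DecidableEq ι₀] [DecidableEq ν]

private lemma conj_mul_eq (x : Matrix ι ν R) (S : Matrix ι ι R) (A : Matrix ν ν R) :
    (x * A)ᵀ * S * (x * A) = Aᵀ * (xᵀ * S * x) * A := by
  rw [Matrix.transpose_mul, ← Matrix.mul_assoc, ← Matrix.mul_assoc,
    Matrix.mul_assoc Aᵀ xᵀ S, Matrix.mul_assoc Aᵀ (xᵀ * S) x]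

private lemma card_congruent (S : Matrix ι ι R) (T A : Matrix ν ν R) (hA : IsUnit A.det) :
    Nat.card {x : Matrix ι ν R // xᵀ * S * x = T}
      = Nat.card {x : Matrix ι ν R // xᵀ * S * x = Aᵀ * T * A} := by
  apply Nat.card_congr
  refine ⟨fun x => ⟨x.1 * A, by rw [conj_mul_eq, x.2]⟩,
    fun y => ⟨y.1 * A⁻¹, ?_⟩, ?_, ?_⟩
  · rw [conj_mul_eq, y.2, ← conj_mul_eq, Matrix.mul_nonsing_inv _ hA]
    simp
  · intro x
    ext
    simp [Matrix.mul_assoc, Matrix.mul_nonsing_inv _ hA]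
  · intro y
    ext
    simp [Matrix.mul_assoc, Matrix.nonsing_inv_mul _ hA]

private lemma card_reindex (e : ι₁ ≃ ι) (S : Matrix ι ι R) (T : Matrix ν ν R) :
    Nat.card {x : Matrix ι ν R // xᵀ * S * x = T}
      = Nat.card {y : Matrix ι₁ ν R // yᵀ * (S.submatrix e e) * y = T} := by
  apply Nat.card_congr
  refine ⟨fun x => ⟨x.1.submatrix e id, ?_⟩, fun y => ⟨y.1.submatrix e.symm id, ?_⟩, ?_, ?_⟩
  · rw [Matrix.transpose_submatrix, Matrix.submatrix_mul_equiv, Matrix.submatrix_mul_equiv]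
    simpa using x.2
  · obtain ⟨y, h⟩ := y
    show (y.submatrix e.symm id)ᵀ * S * y.submatrix e.symm id = T
    have hS : S = (S.submatrix e e).submatrix e.symm e.symm := by
      simp [Matrix.submatrix_submatrix]
    rw [Matrix.transpose_submatrix]
    conv_lhs => rw [hS]
    rw [Matrix.submatrix_mul_equiv, Matrix.submatrix_mul_equiv]
    simpa using h
  · intro x
    ext i j
    simp
  · intro y
    ext i j
    simp

private lemma card_split (S₁ : Matrix ι₁ ι₁ R) (S₀ : Matrix ι₀ ι₀ R) (T : Matrix ν ν R) :
    Nat.card {x : Matrix (ι₁ ⊕ ι₀) ν R // xᵀ * (fromBlocks S₁ 0 0 S₀) * x = T}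
      = ∑ x₀ : Matrix ι₀ ν R,
          Nat.card {x₁ : Matrix ι₁ ν R // x₁ᵀ * S₁ * x₁ = T - x₀ᵀ * S₀ * x₀} := by
  have key : ∀ (a : Matrix ι₁ ν R) (b : Matrix ι₀ ν R),
      (fromRows a b)ᵀ * (fromBlocks S₁ 0 0 S₀) * fromRows a b
        = aᵀ * S₁ * a + bᵀ * S₀ * b := by
    intro a b
    rw [Matrix.transpose_fromRows, Matrix.fromCols_mul_fromBlocks,
      Matrix.fromCols_mul_fromRows]
    simp [Matrix.mul_assoc]
  have e : {x : Matrix (ι₁ ⊕ ι₀) ν R // xᵀ * (fromBlocks S₁ 0 0 S₀) * x = T}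
      ≃ (Σ x₀ : Matrix ι₀ ν R, {x₁ : Matrix ι₁ ν R // x₁ᵀ * S₁ * x₁ = T - x₀ᵀ * S₀ * x₀}) := by
    refine ⟨fun x => ⟨x.1.toRows₂, x.1.toRows₁, ?_⟩, fun y => ⟨fromRows y.2.1 y.1, ?_⟩, ?_, ?_⟩
    · have hx := x.2
      rw [← Matrix.fromRows_toRows x.1, key] at hx
      rw [eq_sub_iff_add_eq, hx]
    · rw [key, y.2.2, sub_add_cancel]
    · intro x
      exact Subtype.ext (Matrix.fromRows_toRows x.1)
    · intro y
      rfl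
  rw [Nat.card_congr e, Nat.card_eq_fintype_card, Fintype.card_sigma]
  simp [Nat.card_eq_fintype_card]

end CountLemmas


section Main
variable {p : ℕ} [Fact p.Prime]

private lemma card_term (hp : p ≠ 2) {ι : Type} [Fintype ι] [DecidableEq ι]
    {l₀ n : ℕ} (k : ℕ) [NeZero (p^k)]
    (Ss : Matrix ι ι ℤ_[p]) (S₀ : Matrix (Fin l₀) (Fin l₀) ℤ_[p]) (hS₀ : S₀.IsSymm)
    (hS₀p : ∀ i j, (p : ℤ_[p]) ∣ S₀ i j)
    (T : Matrix (Fin n) (Fin n) ℤ_[p]) (hT : T.IsSymm) (hTdet : IsUnit T.det)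
    (x₀ : Matrix (Fin l₀) (Fin n) (ZMod (p^k))) :
    Nat.card {x₁ : Matrix ι (Fin n) (ZMod (p^k)) //
        x₁ᵀ * Ss.map (PadicInt.toZModPow k) * x₁
          = T.map (PadicInt.toZModPow k) - x₀ᵀ * (S₀.map (PadicInt.toZModPow k)) * x₀}
      = Nat.card {x₁ : Matrix ι (Fin n) (ZMod (p^k)) //
        x₁ᵀ * Ss.map (PadicInt.toZModPow k) * x₁ = T.map (PadicInt.toZModPow k)} := by
  set φ := PadicInt.toZModPow (p := p) k with hφ
  set X₀ : Matrix (Fin l₀) (Fin n) ℤ_[p] := Matrix.of fun i j => (((x₀ i j).val : ℕ) : ℤ_[p])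
    with hX₀def
  have hX₀ : X₀.map φ = x₀ := by
    ext i j
    simp only [Matrix.map_apply, hX₀def, Matrix.of_apply, hφ, map_natCast]
    exact ZMod.natCast_rightInverse _
  set S₀' : Matrix (Fin l₀) (Fin l₀) ℤ_[p] := Matrix.of fun i j => (hS₀p i j).choose with hS₀'def
  have hS₀' : S₀ = (p:ℤ_[p]) • S₀' := by
    ext i j
    exact (hS₀p i j).choose_spec
  set T'' := T - X₀ᵀ * S₀ * X₀ with hT''
  have hT''symm : T''ᵀ = T'' := by
    rw [hT'', Matrix.transpose_sub, hT]
    congr 1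
    rw [Matrix.transpose_mul, Matrix.transpose_mul, Matrix.transpose_transpose, hS₀,
      Matrix.mul_assoc]
  have hcong : T'' = T + (p:ℤ_[p]) • (-(X₀ᵀ * S₀' * X₀)) := by
    rw [hT'', smul_neg, ← sub_eq_add_neg]
    congr 1
    conv_lhs => rw [hS₀']
    rw [Matrix.mul_smul, Matrix.smul_mul]
  obtain ⟨A, C, hA, hEq⟩ := approx T T'' hT hT''symm hTdet (padic_two_unit hp) _ hcong k
  have hpk0 : (φ ((p:ℤ_[p])))^k = 0 := by
    rw [hφ, map_natCast, ← Nat.cast_pow, ZMod.natCast_self]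
  have hmapEq : (A.map φ)ᵀ * T.map φ * A.map φ
      = T.map φ - x₀ᵀ * S₀.map φ * x₀ := by
    have h1 := congrArg (fun M => M.map φ) hEq
    simp only [Matrix.map_mul (f := φ), Matrix.transpose_map] at h1
    rw [h1]
    have h0 : (((p:ℤ_[p]))^k • C).map φ = 0 := by
      ext i j
      simp only [Matrix.map_apply, Matrix.smul_apply, smul_eq_mul, _root_.map_mul, map_pow,
        hpk0, Matrix.zero_apply, zero_mul]
    have haddmap : (T'' + ((p:ℤ_[p]))^k • C).map φ = T''.map φ + (((p:ℤ_[p]))^k • C).map φ := by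
      ext i j
      simp only [Matrix.map_apply, Matrix.add_apply, map_add]
    rw [haddmap, h0, add_zero, hT'']
    have hsubmap : (T - X₀ᵀ * S₀ * X₀).map φ = T.map φ - (X₀ᵀ * S₀ * X₀).map φ := by
      ext i j
      simp only [Matrix.map_apply, Matrix.sub_apply, map_sub]
    rw [hsubmap]
    congr 1
    rw [Matrix.map_mul (f := φ), Matrix.map_mul (f := φ), Matrix.transpose_map, hX₀]
  have hAdet : IsUnit ((A.map φ).det) := by
    rw [← RingHom.mapMatrix_apply, ← RingHom.map_det]
    exact hA.map φ
  rw [← hmapEq]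
  exact (card_congruent (Ss.map φ) (T.map φ) (A.map φ) hAdet).symm

end Main

/-- for `p` odd, `T` unimodular, and `L = L₁ ⊕ L₀` with `Q(L₀) ⊆ pℤ_p`,
the local density polynomials satisfy `α_p(X, T, L) = α_p(X, T, L₁)`, i.e. for every
`r ≥ 0` the densities of `L ⊕ H^r` and `L₁ ⊕ H^r` agree (`H` the hyperbolic plane). -/
theorem local_density_discard_divisible_part (p l₁ l₀ n : ℕ) [Fact p.Prime] (hp : p ≠ 2)
    (S₁ : Matrix (Fin l₁) (Fin l₁) ℤ_[p]) (hS₁ : S₁.IsSymm)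
    (S₀ : Matrix (Fin l₀) (Fin l₀) ℤ_[p]) (hS₀ : S₀.IsSymm)
    (hS₀p : ∀ i j, (p : ℤ_[p]) ∣ S₀ i j)
    (T : Matrix (Fin n) (Fin n) ℤ_[p]) (hT : T.IsSymm) (hTdet : IsUnit T.det)
    (hH : Matrix (Fin 2) (Fin 2) ℤ_[p]) (hhH : (2 : ℤ_[p]) • hH = !![0, 1; 1, 0]) :
    ∀ r : ℕ, ∀ c : ℝ,
      Tendsto (localDensitySeq p
          (Matrix.fromBlocks (Matrix.fromBlocks S₁ 0 0 S₀) 0 0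
            (Matrix.blockDiagonal fun _ : Fin r => hH)) T) atTop (nhds c) ↔
      Tendsto (localDensitySeq p
          (Matrix.fromBlocks S₁ 0 0
            (Matrix.blockDiagonal fun _ : Fin r => hH)) T) atTop (nhds c) := by
  intro r c
  set D := Matrix.blockDiagonal (fun _ : Fin r => hH) with hD
  set Sb := Matrix.fromBlocks (Matrix.fromBlocks S₁ 0 0 S₀) 0 0 D with hSb
  set Ssm := Matrix.fromBlocks S₁ 0 0 D with hSsm
  suffices h : localDensitySeq p Sb T = localDensitySeq p Ssm T by rw [h]
  funext k
  haveI : NeZero (p^k) := ⟨pow_ne_zero _ (Fact.out (p := p.Prime)).ne_zero⟩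
  set φ := PadicInt.toZModPow (p := p) k with hφ
  set e : ((Fin l₁ ⊕ (Fin 2 × Fin r)) ⊕ Fin l₀) ≃ ((Fin l₁ ⊕ Fin l₀) ⊕ (Fin 2 × Fin r)) :=
    (Equiv.sumAssoc (Fin l₁) (Fin 2 × Fin r) (Fin l₀)).trans
      ((Equiv.sumCongr (Equiv.refl (Fin l₁)) (Equiv.sumComm (Fin 2 × Fin r) (Fin l₀))).trans
        (Equiv.sumAssoc (Fin l₁) (Fin l₀) (Fin 2 × Fin r)).symm) with he
  have hsub : (Sb.map φ).submatrix e e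
      = Matrix.fromBlocks (Ssm.map φ) 0 0 (S₀.map φ) := by
    ext i j
    rcases i with (i | i) | i <;> rcases j with (j | j) | j <;>
      simp [he, hSb, hSsm, Matrix.submatrix_apply, Matrix.map_apply, Equiv.sumAssoc,
        Equiv.sumComm, Equiv.sumCongr]
  have hcount : Nat.card {x : Matrix ((Fin l₁ ⊕ Fin l₀) ⊕ (Fin 2 × Fin r)) (Fin n) (ZMod (p^k)) //
        xᵀ * Sb.map φ * x = T.map φ}
      = p^(k * (l₀ * n)) * Nat.card {x : Matrix (Fin l₁ ⊕ (Fin 2 × Fin r)) (Fin n) (ZMod (p^k)) //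
        xᵀ * Ssm.map φ * x = T.map φ} := by
    rw [card_reindex e (Sb.map φ) (T.map φ), hsub, card_split]
    have hterm : ∀ x₀ : Matrix (Fin l₀) (Fin n) (ZMod (p^k)),
        Nat.card {x₁ : Matrix (Fin l₁ ⊕ (Fin 2 × Fin r)) (Fin n) (ZMod (p^k)) //
          x₁ᵀ * Ssm.map φ * x₁ = T.map φ - x₀ᵀ * (S₀.map φ) * x₀}
        = Nat.card {x₁ : Matrix (Fin l₁ ⊕ (Fin 2 × Fin r)) (Fin n) (ZMod (p^k)) //
          x₁ᵀ * Ssm.map φ * x₁ = T.map φ} :=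
      fun x₀ => card_term hp k (Ssm) S₀ hS₀ hS₀p T hT hTdet x₀
    rw [Finset.sum_congr rfl (fun x₀ _ => hterm x₀), Finset.sum_const, Finset.card_univ,
      smul_eq_mul]
    congr 1
    have hmc : Fintype.card (Matrix (Fin l₀) (Fin n) (ZMod (p^k))) = (p^k)^(l₀*n) := by
      rw [← Nat.card_eq_fintype_card]
      calc Nat.card (Matrix (Fin l₀) (Fin n) (ZMod (p^k)))
          = Nat.card (Fin l₀ → Fin n → ZMod (p^k)) := Nat.card_congr Matrix.of.symm
        _ = (p^k)^(l₀*n) := by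
            rw [Nat.card_fun, Nat.card_fun, Nat.card_zmod]
            simp only [Nat.card_eq_fintype_card, Fintype.card_fin]
            ring
    rw [hmc, ← pow_mul]
  simp only [localDensitySeq]
  rw [hcount]
  have hp0 : (p:ℝ) ≠ 0 := Nat.cast_ne_zero.mpr (Fact.out (p := p.Prime)).ne_zero
  rw [Nat.cast_mul, ← mul_assoc]
  congr 1
  have hcast : ((p^(k * (l₀ * n)) : ℕ) : ℝ) = (p:ℝ) ^ ((k * (l₀ * n) : ℕ) : ℤ) := by
    rw [zpow_natCast]
    push_cast
    ring
  rw [hcast, ← zpow_add₀ hp0]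
  congr 1
  simp only [Fintype.card_sum, Fintype.card_prod, Fintype.card_fin]
  push_cast
  ring
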